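/- Let n ≥ 2 and 1 ≤ a ≤ n-1. The number of n-tuples (w₁, …, w_n) of finite words over the positive integers such that the total number of letters occurring in w₁, …, w_n equals a and the sum of all letters occurring in w₁, …, w_n equals n-1, is equal to C(n+a-1, a) · C(n-2, a-1). -/

import Mathlib

namespace CardTuplesWordsAux

variable {α : Type*}

/-- Split a list into `n` pieces of prescribed lengths. -/
def unsplit : ∀ {n : ℕ}, (Fin n → ℕ) → List α → Fin n → List α
  | 0, _, _ => Fin.elim0
  | _ + 1, c, l => Fin.cons (l.take (c 0)) (unsplit (fun i => c i.succ) (l.drop (c 0)))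

lemma unsplit_lengths : ∀ {n : ℕ} (w : Fin n → List α),
    unsplit (fun j => (w j).length) ((List.ofFn w).flatten) = w
  | 0, w => funext fun j => j.elim0
  | n + 1, w => by
    rw [List.ofFn_succ, List.flatten_cons]
    show Fin.cons ((((w 0) ++ (List.ofFn fun i => w i.succ).flatten)).take (w 0).length) _ = w
    rw [List.take_left, List.drop_left]
    have ih := unsplit_lengths (fun i => w i.succ)
    rw [ih]
    exact Fin.cons_self_tail w

lemma length_unsplit : ∀ {n : ℕ} (c : Fin n → ℕ) (l : List α)
    (_ : l.length = ∑ j, c j) (j : Fin n), (unsplit c l j).length = c j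
  | 0, _, _, _, j => j.elim0
  | n + 1, c, l, h, j => by
    rw [Fin.sum_univ_succ] at h
    refine Fin.cases ?_ (fun i => ?_) j
    · show (l.take (c 0)).length = c 0
      rw [List.length_take]
      omega
    · show (unsplit (fun i => c i.succ) (l.drop (c 0)) i).length = c i.succ
      refine length_unsplit _ _ ?_ i
      show (l.drop (c 0)).length = ∑ i : Fin n, c i.succ
      rw [List.length_drop]
      omega

lemma flatten_ofFn_unsplit : ∀ {n : ℕ} (c : Fin n → ℕ) (l : List α)
    (_ : l.length = ∑ j, c j), (List.ofFn (unsplit c l)).flatten = l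
  | 0, c, l, h => by
    simp only [Finset.univ_eq_empty, Finset.sum_empty] at h
    simp [List.length_eq_zero_iff.mp h]
  | n + 1, c, l, h => by
    rw [Fin.sum_univ_succ] at h
    rw [List.ofFn_succ]
    show ((l.take (c 0)) :: List.ofFn fun i =>
        Fin.cons (α := fun _ => List α) (l.take (c 0))
          (unsplit (fun i => c i.succ) (l.drop (c 0))) i.succ).flatten = l
    simp only [Fin.cons_succ]
    show ((l.take (c 0)) :: List.ofFn (unsplit (fun i => c i.succ) (l.drop (c 0)))).flatten = l
    rw [List.flatten_cons, flatten_ofFn_unsplit (fun i => c i.succ) (l.drop (c 0))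
        (by show (l.drop (c 0)).length = ∑ i : Fin n, c i.succ; rw [List.length_drop]; omega)]
    exact List.take_append_drop _ l

lemma length_flatten_ofFn {n : ℕ} (w : Fin n → List α) :
    (List.ofFn w).flatten.length = ∑ j, (w j).length := by
  rw [List.length_flatten, List.map_ofFn, List.sum_ofFn]
  exact Finset.sum_congr rfl fun i _ => rfl

lemma sum_map_flatten_ofFn {n : ℕ} (w : Fin n → List α) (f : α → ℕ) :
    (((List.ofFn w).flatten).map f).sum = ∑ j, ((w j).map f).sum := by
  rw [List.map_flatten, List.sum_flatten, List.map_ofFn, List.map_ofFn, List.sum_ofFn]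
  exact Finset.sum_congr rfl fun i _ => rfl

/-- The main splitting equivalence. -/
def mainEquiv (n a s : ℕ) (f : ℕ+ → ℕ) :
    {w : Fin n → List ℕ+ //
        (∑ j, (w j).length) = a ∧ (∑ j, ((w j).map f).sum) = s} ≃
      {c : Fin n → ℕ // ∑ j, c j = a} ×
        {l : List ℕ+ // l.length = a ∧ (l.map f).sum = s} where
  toFun w := (⟨fun j => (w.1 j).length, w.2.1⟩,
    ⟨(List.ofFn w.1).flatten,
      by rw [length_flatten_ofFn]; exact w.2.1,
      by rw [sum_map_flatten_ofFn]; exact w.2.2⟩)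
  invFun p := ⟨unsplit p.1.1 p.2.1, by
    have hlen : p.2.1.length = ∑ j, p.1.1 j := by rw [p.2.2.1, p.1.2]
    refine ⟨?_, ?_⟩
    · rw [Finset.sum_congr rfl fun j _ => length_unsplit _ _ hlen j]
      exact p.1.2
    · rw [← sum_map_flatten_ofFn, flatten_ofFn_unsplit _ _ hlen]
      exact p.2.2.2⟩
  left_inv w := Subtype.ext (unsplit_lengths w.1)
  right_inv p := by
    have hlen : p.2.1.length = ∑ j, p.1.1 j := by rw [p.2.2.1, p.1.2]
    refine Prod.ext (Subtype.ext (funext fun j => length_unsplit _ _ hlen j))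
      (Subtype.ext ?_)
    exact flatten_ofFn_unsplit _ _ hlen

instance finitePiSum (k m : ℕ) : Finite {f : Fin k → ℕ // ∑ i, f i = m} :=
  Finite.of_equiv _ (Sym.equivNatSumOfFintype (Fin k) m)

lemma card_pi_sum (k m : ℕ) :
    Nat.card {f : Fin k → ℕ // ∑ i, f i = m} = (k + m - 1).choose m := by
  rw [← Nat.card_congr (Sym.equivNatSumOfFintype (Fin k) m),
    Nat.card_eq_fintype_card, Sym.card_sym_eq_choose, Fintype.card_fin]

lemma sum_map_get (l : List α) (f : α → ℕ) (k : ℕ) (hk : l.length = k) :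
    ∑ i : Fin k, f (l.get (Fin.cast hk.symm i)) = (l.map f).sum := by
  subst hk
  conv_rhs => rw [← List.ofFn_get l]
  rw [List.map_ofFn, List.sum_ofFn]
  exact Finset.sum_congr rfl fun i _ => rfl

lemma ofFn_get_cast (l : List α) {k : ℕ} (hk : l.length = k) :
    List.ofFn (fun i => l.get (Fin.cast hk.symm i)) = l := by
  subst hk
  exact List.ofFn_get l

/-- Lists with prescribed length are tuples. -/
def listEquiv (k s : ℕ) (f : ℕ+ → ℕ) :
    {l : List ℕ+ // l.length = k ∧ (l.map f).sum = s} ≃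
      {g : Fin k → ℕ+ // ∑ i, f (g i) = s} where
  toFun l := ⟨fun i => l.1.get (Fin.cast l.2.1.symm i),
    (sum_map_get l.1 f k l.2.1).trans l.2.2⟩
  invFun g := ⟨List.ofFn g.1, by simp, by
    rw [List.map_ofFn, List.sum_ofFn]
    exact (Finset.sum_congr rfl fun i _ => rfl).trans g.2⟩
  left_inv l := Subtype.ext (ofFn_get_cast l.1 l.2.1)
  right_inv g := Subtype.ext (funext fun i => by
    show (List.ofFn g.1).get (Fin.cast (List.length_ofFn (f := g.1)).symm i) = g.1 i
    rw [List.get_ofFn]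
    exact congrArg g.1 (Fin.ext rfl))

/-- Shift from positive naturals to naturals. -/
def pnatEquiv (k s : ℕ) (hks : k ≤ s) :
    {g : Fin k → ℕ+ // ∑ i, PNat.val (g i) = s} ≃ {f : Fin k → ℕ // ∑ i, f i = s - k} where
  toFun g := ⟨fun i => PNat.val (g.1 i) - 1, by
    have h : ∑ i, ((PNat.val (g.1 i) - 1) + 1) = s :=
      (Finset.sum_congr rfl fun i _ => Nat.succ_pred_eq_of_pos (g.1 i).pos).trans g.2
    rw [Finset.sum_add_distrib, Finset.sum_const, Finset.card_univ, Fintype.card_fin,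
      smul_eq_mul, mul_one] at h
    show ∑ i, (PNat.val (g.1 i) - 1) = s - k
    omega⟩
  invFun f := ⟨fun i => ⟨f.1 i + 1, Nat.succ_pos _⟩, by
    have h : ∑ i, (f.1 i + 1) = (s - k) + k := by
      rw [Finset.sum_add_distrib, Finset.sum_const, Finset.card_univ, Fintype.card_fin,
        smul_eq_mul, mul_one, f.2]
    have h2 : ((s - k) + k) = s := by omega
    show ∑ i, (f.1 i + 1) = s
    exact h.trans h2⟩
  left_inv g := Subtype.ext (funext fun i => PNat.coe_injective (by
    show PNat.val (g.1 i) - 1 + 1 = PNat.val (g.1 i)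
    have := (g.1 i).pos
    omega))
  right_inv f := Subtype.ext (funext fun i => by
    show f.1 i + 1 - 1 = f.1 i
    omega)

end CardTuplesWordsAux

open CardTuplesWordsAux in
/-- `dim D^a_∞(n)`: the number of `n`-tuples `(w₁, …, w_n)` of words over the positive
integers with `a` letters in total, the sum of all letters being `n-1`, is
`C(n+a-1, a) · C(n-2, a-1)`. -/
theorem card_tuples_words_degree_weight (n a : ℕ) (hn : 2 ≤ n) (ha1 : 1 ≤ a)
    (ha2 : a ≤ n - 1) :
    {w : Fin n → List ℕ+ |
        (∑ j, (w j).length) = a ∧ (∑ j, ((w j).map (fun x => (x : ℕ))).sum) = n - 1}.Finite ∧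
      Nat.card {w : Fin n → List ℕ+ |
          (∑ j, (w j).length) = a ∧ (∑ j, ((w j).map (fun x => (x : ℕ))).sum) = n - 1} =
        Nat.choose (n + a - 1) a * Nat.choose (n - 2) (a - 1) := by
  simp only [bind_pure_comp, List.map_eq_map, List.map_id']
  have e : {w : Fin n → List ℕ+ //
        (∑ j, (w j).length) = a ∧ (∑ j, ((w j).map PNat.val).sum) = n - 1} ≃
      {c : Fin n → ℕ // ∑ j, c j = a} × {f : Fin a → ℕ // ∑ i, f i = n - 1 - a} :=
    (mainEquiv n a (n - 1) PNat.val).trans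
      (Equiv.prodCongr (Equiv.refl _)
        ((listEquiv a (n - 1) PNat.val).trans (pnatEquiv a (n - 1) ha2)))
  have hfin : Finite {w : Fin n → List ℕ+ //
      (∑ j, (w j).length) = a ∧ (∑ j, ((w j).map PNat.val).sum) = n - 1} :=
    Finite.of_equiv _ e.symm
  have hcard : Nat.card {w : Fin n → List ℕ+ //
        (∑ j, (w j).length) = a ∧ (∑ j, ((w j).map PNat.val).sum) = n - 1} =
      (n + a - 1).choose a * (n - 2).choose (a - 1) := by
    rw [Nat.card_congr e, Nat.card_prod, card_pi_sum, card_pi_sum]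
    congr 1
    rw [show a + (n - 1 - a) - 1 = n - 2 by omega, show n - 1 - a = (n - 2) - (a - 1) by omega,
      Nat.choose_symm (by omega)]
  exact ⟨Set.finite_coe_iff.mp hfin, hcard⟩
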